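/- Let V be a vector space of finite dimension m ≥ 4 over a field K, with a nondegenerate bilinear form B. Suppose there exists v₀ ∈ V with B(v₀,v₀) ≠ 0. Then there exist a vector v with B(v,v) ≠ 0 and a hyperplane H ≤ V with v ∈ H, such that the (one-dimensional) right radical R(H) = {w ∈ V : B(x,w) = 0 for all x ∈ H} is not contained in H. -/

import Mathlib

open LinearMap (BilinForm)
open Module

section aux
variable {K V : Type*} [Field K] [AddCommGroup V] [Module K V] [FiniteDimensional K V]

lemma aux_pair (hdim : 4 ≤ finrank K V) (B : BilinForm K V) (hnd : B.Nondegenerate)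
    {v₀ : V} (hv₀ : B v₀ v₀ ≠ 0) :
    ∃ v w : V, B v v ≠ 0 ∧ B w w ≠ 0 ∧ B v w = 0 := by
  by_cases hcase : ∃ u, B u v₀ = 0 ∧ B u u ≠ 0
  · obtain ⟨u, h1, h2⟩ := hcase
    exact ⟨u, v₀, h2, hv₀, h1⟩
  push_neg at hcase
  set q := B v₀ v₀ with hq
  have key : ∃ x y, B x v₀ = 0 ∧ B y v₀ = 0 ∧ q + B v₀ x ≠ 0 ∧ q + B v₀ y ≠ 0 ∧
      q + B v₀ y + B x y = 0 := by
    by_contra hbad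
    push_neg at hbad
    -- claim1: for z with both orthogonality to v₀, B x z ≠ 0 → B v₀ x = B x z
    have claim1 : ∀ z, B z v₀ = 0 → B v₀ z = 0 → ∀ x, B x v₀ = 0 → B x z ≠ 0 →
        B v₀ x = B x z := by
      intro z hz1 hz2 x hx hs
      set s := B x z with hsdef
      have hx' : B ((-q/s) • x) v₀ = 0 := by
        simp [map_smul, hx]
      have h2 : q + B v₀ z ≠ 0 := by simpa [hz2] using hv₀
      have h3 : q + B v₀ z + B ((-q/s) • x) z = 0 := by
        simp [map_smul, hz2, ← hsdef]
        field_simp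
        ring
      have h4 : ¬ (q + B v₀ ((-q/s) • x) ≠ 0) := by
        intro hcon
        exact hbad _ _ hx' hz1 hcon h2 h3
      push_neg at h4
      have hqne : q ≠ 0 := hv₀
      simp only [map_smul, smul_eq_mul] at h4
      have h5 : (-q/s) * B v₀ x = -q := by linear_combination h4
      have h6 : (-q) * B v₀ x = (-q) * s := by
        calc (-q) * B v₀ x = s * ((-q/s) * B v₀ x) := by field_simp
          _ = s * (-q) := by rw [h5]
          _ = (-q) * s := by ring
      exact mul_left_cancel₀ (neg_ne_zero.mpr hqne) h6
    -- claim2: with a witness x₁, extend to all x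
    have claim2 : ∀ z, B z v₀ = 0 → B v₀ z = 0 →
        ∀ x₁, B x₁ v₀ = 0 → B x₁ z ≠ 0 → ∀ x, B x v₀ = 0 → B x z = B v₀ x := by
      intro z hz1 hz2 x₁ hx₁ hx₁z x hx
      by_cases hxz : B x z = 0
      · have hsum : B (x + x₁) z ≠ 0 := by
          simp only [map_add, LinearMap.add_apply, hxz, zero_add]
          exact hx₁z
        have h1 := claim1 z hz1 hz2 (x + x₁)
          (by simp only [map_add, LinearMap.add_apply, hx, hx₁, add_zero]) hsum
        have h2 := claim1 z hz1 hz2 x₁ hx₁ hx₁z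
        simp only [map_add, LinearMap.add_apply] at h1
        rw [hxz]
        linear_combination h2 - h1 - hxz
      · exact (claim1 z hz1 hz2 x hx hxz).symm
    -- a vector orthogonal (both sides) to v₀ and right-orthogonal to the
    -- hyperplane H₀ must vanish
    have hzero : ∀ z, B z v₀ = 0 → B v₀ z = 0 → (∀ x, B x v₀ = 0 → B x z = 0) → z = 0 := by
      intro z hz1 hz2 hP
      apply hnd.2 z
      intro y
      show B y z = 0
      have hy' : B (y - (B y v₀ / q) • v₀) v₀ = 0 := by
        simp only [map_sub, map_smul, LinearMap.sub_apply, LinearMap.smul_apply, smul_eq_mul,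
          ← hq]
        rw [div_mul_cancel₀ _ hv₀, sub_self]
      have hpy := hP _ hy'
      simp only [map_sub, map_smul, LinearMap.sub_apply, LinearMap.smul_apply, smul_eq_mul,
        hz2, mul_zero, sub_zero] at hpy
      exact hpy
    set U := LinearMap.ker (B.flip v₀) ⊓ LinearMap.ker (B v₀) with hU
    have hUrank : 2 ≤ finrank K U := by
      rw [hU]
      have e1 := LinearMap.finrank_range_add_finrank_ker (B.flip v₀)
      have e2 := LinearMap.finrank_range_add_finrank_ker (B v₀)
      have r1 : finrank K (LinearMap.range (B.flip v₀)) ≤ 1 := by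
        simpa using Submodule.finrank_le (LinearMap.range (B.flip v₀))
      have r2 : finrank K (LinearMap.range (B v₀)) ≤ 1 := by
        simpa using Submodule.finrank_le (LinearMap.range (B v₀))
      have e3 := Submodule.finrank_sup_add_finrank_inf_eq
        (LinearMap.ker (B.flip v₀)) (LinearMap.ker (B v₀))
      have e4 : finrank K ((LinearMap.ker (B.flip v₀)) ⊔ (LinearMap.ker (B v₀)) :
          Submodule K V) ≤ finrank K V := Submodule.finrank_le _
      omega
    have memU : ∀ z, z ∈ U → B z v₀ = 0 ∧ B v₀ z = 0 := by
      intro z hz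
      rw [hU, Submodule.mem_inf, LinearMap.mem_ker, LinearMap.mem_ker] at hz
      simpa [LinearMap.flip_apply] using hz
    have hUne : ∃ z₁ ∈ U, z₁ ≠ 0 := by
      rw [← Submodule.ne_bot_iff]
      intro hbot
      rw [hbot] at hUrank
      simp [finrank_bot] at hUrank
    obtain ⟨z₁, hz₁U, hz₁0⟩ := hUne
    have hz₂ex : ∃ z₂ ∈ U, z₂ ∉ Submodule.span K {z₁} := by
      by_contra hcon
      push_neg at hcon
      have hle : U ≤ Submodule.span K {z₁} := hcon
      have hmono := Submodule.finrank_mono hle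
      rw [finrank_span_singleton hz₁0] at hmono
      omega
    obtain ⟨z₂, hz₂U, hz₂span⟩ := hz₂ex
    obtain ⟨h1a, h1b⟩ := memU z₁ hz₁U
    obtain ⟨h2a, h2b⟩ := memU z₂ hz₂U
    by_cases hP1 : ∀ x, B x v₀ = 0 → B x z₁ = 0
    · exact hz₁0 (hzero z₁ h1a h1b hP1)
    by_cases hP2 : ∀ x, B x v₀ = 0 → B x z₂ = 0
    · exact hz₂span ((hzero z₂ h2a h2b hP2) ▸ Submodule.zero_mem _)
    push_neg at hP1 hP2
    obtain ⟨x₁, hx₁v, hx₁z⟩ := hP1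
    obtain ⟨x₂, hx₂v, hx₂z⟩ := hP2
    have c1 := claim2 z₁ h1a h1b x₁ hx₁v hx₁z
    have c2 := claim2 z₂ h2a h2b x₂ hx₂v hx₂z
    have hdiff : z₁ - z₂ = 0 := by
      apply hzero (z₁ - z₂)
      · simp only [map_sub, LinearMap.sub_apply, h1a, h2a, sub_zero]
      · simp only [map_sub, h1b, h2b, sub_zero]
      · intro x hx
        simp only [map_sub, c1 x hx, c2 x hx, sub_self]
    have heqz : z₁ = z₂ := by rwa [sub_eq_zero] at hdiff
    exact hz₂span (heqz ▸ Submodule.mem_span_singleton_self z₁)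
  obtain ⟨x, y, hx, hy, hqx, hqy, heq⟩ := key
  refine ⟨v₀ + x, v₀ + y, ?_, ?_, ?_⟩
  · have hxx : B x x = 0 := hcase x hx
    simp only [map_add, LinearMap.add_apply]
    rw [← hq] at *
    simpa [hx, hxx, add_assoc] using hqx
  · have hyy : B y y = 0 := hcase y hy
    simp only [map_add, LinearMap.add_apply]
    simpa [hy, hyy, add_assoc] using hqy
  · simp only [map_add, LinearMap.add_apply]
    rw [hx, ← hq]
    linear_combination heq

end aux

theorem stmt_7 {K V : Type*} [Field K] [AddCommGroup V] [Module K V] [FiniteDimensional K V]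
    (hdim : 4 ≤ Module.finrank K V)
    (B : BilinForm K V) (hnd : B.Nondegenerate)
    (hex : ∃ v₀ : V, B v₀ v₀ ≠ 0) :
    ∃ (v : V) (H : Submodule K V),
      B v v ≠ 0 ∧ v ∈ H ∧ Module.finrank K H = Module.finrank K V - 1 ∧
        ∃ w : V, (∀ x ∈ H, B x w = 0) ∧ w ∉ H := by
  obtain ⟨v₀, hv₀⟩ := hex
  obtain ⟨v, w, hv, hw, hvw⟩ := aux_pair hdim B hnd hv₀
  have hfw : B.flip w ≠ 0 := by
    intro h
    apply hw
    simpa using congrFun (congrArg DFunLike.coe h) w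
  refine ⟨v, LinearMap.ker (B.flip w), hv, ?_, ?_, w, ?_, ?_⟩
  · simpa [LinearMap.mem_ker] using hvw
  · have h0 : 0 < Module.finrank K (LinearMap.range (B.flip w)) := by
      apply Module.finrank_pos_iff_exists_ne_zero.mpr
      refine ⟨⟨B.flip w w, LinearMap.mem_range_self _ w⟩, ?_⟩
      simp only [ne_eq, Submodule.mk_eq_zero, LinearMap.flip_apply]
      exact hw
    have hle : Module.finrank K (LinearMap.range (B.flip w)) ≤ 1 := by
      simpa using Submodule.finrank_le (LinearMap.range (B.flip w))
    have h1 := LinearMap.finrank_range_add_finrank_ker (B.flip w)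
    omega
  · intro x hx
    simpa [LinearMap.mem_ker] using hx
  · simp only [LinearMap.mem_ker, LinearMap.flip_apply]
    exact hw
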